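/- Let C_1, …, C_ℓ be simultaneously diagonalizable positive semi-definite operators on K and A_1, …, A_ℓ self-adjoint operators on H. Fix an orthonormal basis (q_i) of H and let A_i↓ = Σ_j λ_j(A_i) |q_j⟩⟨q_j| be the diagonalized version of A_i with eigenvalues in non-increasing order in this fixed basis. Then for every probability measure (p_i)_{i=1}^ℓ, the operator Σ_i p_i C_i ⊗ A_i↓ majorizes Σ_i p_i C_i ⊗ A_i. -/

import Mathlib

open Finset Matrix
open scoped Kronecker ComplexOrder

/-- `x` majorizes `y`: every subset-sum of `y` is dominated by some subset-sum of `x`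
of the same cardinality (equivalently, all top-`k` partial sums of the non-increasing
rearrangements dominate), and the total sums agree. -/
def Majorizes {ι κ : Type*} [Fintype ι] [Fintype κ] (x : ι → ℝ) (y : κ → ℝ) : Prop :=
  (∀ t : Finset κ, ∃ s : Finset ι, s.card = t.card ∧ ∑ j ∈ t, y j ≤ ∑ i ∈ s, x i) ∧
    ∑ j, y j = ∑ i, x i
/-- The non-increasing rearrangement `x↓` of a vector `x ∈ ℝ^d`. -/
noncomputable def sortDesc {d : ℕ} (x : Fin d → ℝ) : Fin d → ℝ :=
  x ∘ ⇑(Tuple.sort (fun j => OrderDual.toDual (x j)))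

/-- `S↓`: the diagonal matrix (in the fixed standard basis) whose diagonal consists of the
eigenvalues of `S` in non-increasing order. -/
noncomputable def matDown {d : ℕ} {S : Matrix (Fin d) (Fin d) ℂ} (hS : S.IsHermitian) :
    Matrix (Fin d) (Fin d) ℂ :=
  Matrix.diagonal fun i => (sortDesc hS.eigenvalues i : ℂ)

/-! ### Auxiliary lemmas -/

/-- fractional top-k indicator -/
noncomputable def gam (κ : ℝ) (r : ℕ) : ℝ := max 0 (κ - r) - max 0 (κ - (r + 1))

lemma gam_nonneg (κ : ℝ) (r : ℕ) : 0 ≤ gam κ r := by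
  unfold gam
  have : max 0 (κ - (r + 1)) ≤ max 0 (κ - r) := by
    apply max_le_max le_rfl; linarith
  linarith

lemma gam_le_one (κ : ℝ) (r : ℕ) : gam κ r ≤ 1 := by
  unfold gam
  rcases le_or_gt (κ - r) 0 with h | h
  · have : max 0 (κ - r) = 0 := max_eq_left h
    have h2 : 0 ≤ max 0 (κ - (r+1)) := le_max_left _ _
    linarith
  · have h1 : max 0 (κ - r) = κ - r := max_eq_right h.le
    have h2 : κ - (r+1) ≤ max 0 (κ - (r+1)) := le_max_right _ _
    linarith

lemma gam_eq_one {κ : ℝ} {r : ℕ} (h : (r : ℝ) + 1 ≤ κ) : gam κ r = 1 := by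
  unfold gam
  rw [max_eq_right (by linarith), max_eq_right (by linarith)]
  ring

lemma gam_eq_zero {κ : ℝ} {r : ℕ} (h : κ ≤ r) : gam κ r = 0 := by
  unfold gam
  rw [max_eq_left (by linarith), max_eq_left (by linarith)]
  ring

lemma sum_gam {n : ℕ} {κ : ℝ} (h0 : 0 ≤ κ) (hn : κ ≤ n) :
    ∑ r ∈ Finset.range n, gam κ r = κ := by
  have hcongr : ∀ r ∈ Finset.range n, gam κ r =
      (fun m : ℕ => max 0 (κ - m)) r - (fun m : ℕ => max 0 (κ - m)) (r + 1) := by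
    intro r _
    unfold gam
    push_cast
    ring_nf
  rw [Finset.sum_congr rfl hcongr, Finset.sum_range_sub' (fun m : ℕ => max 0 (κ - m)) n]
  simp only [Nat.cast_zero, sub_zero]
  rw [max_eq_right (by linarith), max_eq_left (by linarith)]
  ring

lemma sum_gam_fin {n : ℕ} {κ : ℝ} (h0 : 0 ≤ κ) (hn : κ ≤ n) :
    ∑ r : Fin n, gam κ (r : ℕ) = κ := by
  rw [Fin.sum_univ_eq_sum_range]; exact sum_gam h0 hn

lemma exists_max_subset {ι : Type*} [Fintype ι] [DecidableEq ι] (d : ι → ℝ) (k : ℕ)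
    (hk : k ≤ Fintype.card ι) :
    ∃ s : Finset ι, s.card = k ∧ ∀ s' : Finset ι, s'.card = k →
      ∑ ν ∈ s', d ν ≤ ∑ ν ∈ s, d ν := by
  have hne : (Finset.powersetCard k (univ : Finset ι)).Nonempty :=
    Finset.powersetCard_nonempty.2 (by simpa using hk)
  obtain ⟨s, hs, hmax⟩ := Finset.exists_max_image _ (fun s => ∑ ν ∈ s, d ν) hne
  refine ⟨s, (Finset.mem_powersetCard_univ).1 hs, fun s' hs' => hmax s' ?_⟩
  exact (Finset.mem_powersetCard_univ).2 hs'

/-- L4: combinatorial lemma -/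
lemma sum_mul_le_max_subset {ι : Type*} [Fintype ι] [DecidableEq ι] (d c : ι → ℝ)
    (hc0 : ∀ ν, 0 ≤ c ν) (hc1 : ∀ ν, c ν ≤ 1) (k : ℕ) (hck : ∑ ν, c ν = k)
    (s : Finset ι) (hs : s.card = k)
    (hmax : ∀ s' : Finset ι, s'.card = k → ∑ ν ∈ s', d ν ≤ ∑ ν ∈ s, d ν) :
    ∑ ν, d ν * c ν ≤ ∑ ν ∈ s, d ν := by
  rcases Nat.eq_zero_or_pos k with hk0 | hkpos
  · subst hk0
    have hc : ∀ ν ∈ (univ : Finset ι), c ν = 0 := by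
      intro ν _
      have := (Finset.sum_eq_zero_iff_of_nonneg (fun ν _ => hc0 ν)).1 (by simpa using hck)
      exact this ν (mem_univ ν)
    have hz : ∑ ν, d ν * c ν = 0 :=
      Finset.sum_eq_zero (fun ν _ => by rw [hc ν (mem_univ ν), mul_zero])
    rw [hz]
    have : s = ∅ := Finset.card_eq_zero.1 hs
    simp [this]
  · have hne : s.Nonempty := Finset.card_pos.1 (hs ▸ hkpos)
    obtain ⟨ν₀, hν₀s, hmin⟩ := Finset.exists_min_image s d hne
    set θ := d ν₀ with hθ
    have hout : ∀ ν ∉ s, d ν ≤ θ := by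
      intro ν hν
      have hins : (insert ν (s.erase ν₀)).card = k := by
        rw [Finset.card_insert_of_notMem (fun h => hν (Finset.mem_of_mem_erase h)),
          Finset.card_erase_of_mem hν₀s, hs]
        omega
      have := hmax _ hins
      rw [Finset.sum_insert (fun h => hν (Finset.mem_of_mem_erase h)),
        Finset.sum_erase_eq_sub hν₀s] at this
      linarith
    have h1 : ∑ ν ∈ s, d ν * c ν ≤ ∑ ν ∈ s, (d ν + θ * (c ν - 1)) := by
      apply Finset.sum_le_sum
      intro ν hν
      have h := mul_le_mul_of_nonpos_right (hmin ν hν) (by linarith [hc1 ν] : c ν - 1 ≤ 0)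
      nlinarith [hc1 ν]
    have h2 : ∑ ν ∈ sᶜ, d ν * c ν ≤ ∑ ν ∈ sᶜ, θ * c ν := by
      apply Finset.sum_le_sum
      intro ν hν
      exact mul_le_mul_of_nonneg_right (hout ν (Finset.mem_compl.1 hν)) (hc0 ν)
    have hsplit : ∑ ν, d ν * c ν = ∑ ν ∈ s, d ν * c ν + ∑ ν ∈ sᶜ, d ν * c ν :=
      (Finset.sum_add_sum_compl s _).symm
    have hcs : ∑ ν ∈ s, c ν + ∑ ν ∈ sᶜ, c ν = (k : ℝ) := by
      rw [Finset.sum_add_sum_compl]; exact hck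
    have e1 : ∑ ν ∈ s, (d ν + θ * (c ν - 1)) =
        ∑ ν ∈ s, d ν + θ * (∑ ν ∈ s, c ν - k) := by
      rw [Finset.sum_add_distrib, ← Finset.mul_sum, Finset.sum_sub_distrib]
      simp [hs, mul_sub]
    have e2 : ∑ ν ∈ sᶜ, θ * c ν = θ * ∑ ν ∈ sᶜ, c ν := by rw [Finset.mul_sum]
    have e3 : θ * (∑ ν ∈ s, c ν - k) + θ * ∑ ν ∈ sᶜ, c ν = 0 := by
      rw [← mul_add, show (∑ ν ∈ s, c ν - k) + ∑ ν ∈ sᶜ, c ν = 0 by linarith]; ring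
    linarith

lemma antitone_sortDesc {n : ℕ} (x : Fin n → ℝ) : Antitone (sortDesc x) := by
  intro a b hab
  exact Tuple.monotone_sort (fun j => OrderDual.toDual (x j)) hab

/-- L3 for antitone μ -/
lemma sum_mul_le_gam_of_antitone {n : ℕ} (μ c : Fin n → ℝ) (hmono : Antitone μ)
    (hc0 : ∀ r, 0 ≤ c r) (hc1 : ∀ r, c r ≤ 1) :
    ∑ r, μ r * c r ≤ ∑ r : Fin n, μ r * gam (∑ r, c r) (r : ℕ) := by
  set κ := ∑ r, c r with hκ
  have hκ0 : 0 ≤ κ := Finset.sum_nonneg (fun r _ => hc0 r)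
  have hκn : κ ≤ n := by
    calc κ ≤ ∑ _r : Fin n, (1 : ℝ) := Finset.sum_le_sum (fun r _ => hc1 r)
    _ = n := by simp
  rcases lt_or_ge (Nat.floor κ) n with hm | hm
  · set m : Fin n := ⟨Nat.floor κ, hm⟩ with hmdef
    set θ := μ m with hθ
    have hpt : ∀ r : Fin n, θ * (gam κ (r : ℕ) - c r) ≤ μ r * (gam κ (r : ℕ) - c r) := by
      intro r
      rcases lt_trichotomy (r : ℕ) (m : ℕ) with h | h | h
      · have h1 : gam κ (r : ℕ) = 1 := by
          apply gam_eq_one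
          have h1' : ((r : ℕ) : ℝ) + 1 ≤ ((Nat.floor κ : ℕ) : ℝ) := by exact_mod_cast h
          have h2 : ((Nat.floor κ : ℕ) : ℝ) ≤ κ := Nat.floor_le hκ0
          linarith
        have hge : θ ≤ μ r := hmono (by exact Fin.le_def.2 h.le)
        have hnn : 0 ≤ gam κ (r : ℕ) - c r := by rw [h1]; linarith [hc1 r]
        exact mul_le_mul_of_nonneg_right hge hnn
      · have : r = m := Fin.ext h
        rw [this]
      · have h0 : gam κ (r : ℕ) = 0 := by
          apply gam_eq_zero
          have hfl : κ < (Nat.floor κ : ℝ) + 1 := Nat.lt_floor_add_one κ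
          have hfl2 : κ < ((m : ℕ) : ℝ) + 1 := by exact_mod_cast hfl
          have hr : ((m : ℕ) : ℝ) + 1 ≤ ((r : ℕ) : ℝ) := by exact_mod_cast h
          linarith
        have hle : μ r ≤ θ := hmono (by exact Fin.le_def.2 h.le)
        have hnp : gam κ (r : ℕ) - c r ≤ 0 := by rw [h0]; linarith [hc0 r]
        exact mul_le_mul_of_nonpos_right hle hnp
    have hsum : ∑ r : Fin n, θ * (gam κ (r : ℕ) - c r)
        ≤ ∑ r : Fin n, μ r * (gam κ (r : ℕ) - c r) :=
      Finset.sum_le_sum (fun r _ => hpt r)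
    have hzero : ∑ r : Fin n, θ * (gam κ (r : ℕ) - c r) = 0 := by
      rw [← Finset.mul_sum, Finset.sum_sub_distrib, sum_gam_fin hκ0 hκn, ← hκ]
      simp
    have hexp : ∑ r : Fin n, μ r * (gam κ (r : ℕ) - c r)
        = ∑ r : Fin n, μ r * gam κ (r : ℕ) - ∑ r, μ r * c r := by
      rw [← Finset.sum_sub_distrib]
      exact Finset.sum_congr rfl (fun r _ => by ring)
    linarith [hzero ▸ hsum, hexp]
  · have hnκ : (n : ℝ) ≤ κ := le_trans (by exact_mod_cast Nat.cast_le.2 hm) (Nat.floor_le hκ0)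
    have hκeq : κ = n := le_antisymm hκn hnκ
    have hc : ∀ r : Fin n, c r = 1 := by
      intro r
      by_contra hne
      have hlt : c r < 1 := lt_of_le_of_ne (hc1 r) hne
      have hslt : κ < ∑ _r : Fin n, (1:ℝ) :=
        Finset.sum_lt_sum (fun i _ => hc1 i) ⟨r, mem_univ r, hlt⟩
      simp at hslt
      linarith
    have hg : ∀ r : Fin n, gam κ (r : ℕ) = 1 := by
      intro r
      apply gam_eq_one
      have h1 : (r : ℕ) + 1 ≤ n := r.2
      have h2 : ((r : ℕ) : ℝ) + 1 ≤ n := by exact_mod_cast h1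
      linarith [hκeq ▸ h2]
    apply le_of_eq
    exact Finset.sum_congr rfl (fun r _ => by rw [hc r, hg r])

/-- L3 with sorting -/
lemma sum_mul_le_sortDesc_gam {n : ℕ} (x c : Fin n → ℝ)
    (hc0 : ∀ r, 0 ≤ c r) (hc1 : ∀ r, c r ≤ 1) :
    ∑ r, x r * c r ≤ ∑ r : Fin n, sortDesc x r * gam (∑ r, c r) (r : ℕ) := by
  set σ := Tuple.sort (fun j => OrderDual.toDual (x j)) with hσ
  have h1 : ∑ r, x r * c r = ∑ r, sortDesc x r * c (σ r) := by
    rw [← Equiv.sum_comp σ (fun r => x r * c r)]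
    rfl
  have h2 : ∑ r, c (σ r) = ∑ r, c r := Equiv.sum_comp σ c
  rw [h1, ← h2]
  exact sum_mul_le_gam_of_antitone (sortDesc x) (fun r => c (σ r))
    (antitone_sortDesc x) (fun r => hc0 _) (fun r => hc1 _)

/-- diagonal conjugation entry -/
lemma diag_conj_apply {ι : Type*} [Fintype ι] [DecidableEq ι] (d : ι → ℝ)
    (W : Matrix ι ι ℂ) (m : ι) :
    (star W * Matrix.diagonal (fun ν => (d ν : ℂ)) * W) m m
      = ((∑ ν, d ν * Complex.normSq (W ν m) : ℝ) : ℂ) := by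
  rw [Matrix.mul_apply]
  have h1 : ∀ ν' : ι, (star W * Matrix.diagonal (fun ν => (d ν : ℂ))) m ν'
      = (starRingEnd ℂ) (W ν' m) * (d ν' : ℂ) := by
    intro ν'
    rw [Matrix.mul_apply]
    simp [Matrix.diagonal_apply, Matrix.star_apply, Finset.sum_ite_eq]
  push_cast
  rw [Finset.sum_congr rfl (fun ν' _ => by rw [h1 ν'])]
  apply Finset.sum_congr rfl
  intro ν _
  have hns : (starRingEnd ℂ) (W ν m) * (W ν m) = ((Complex.normSq (W ν m) : ℝ) : ℂ) := by
    rw [mul_comm, Complex.mul_conj]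
  calc (starRingEnd ℂ) (W ν m) * (d ν : ℂ) * W ν m
      = (d ν : ℂ) * ((starRingEnd ℂ) (W ν m) * W ν m) := by ring
    _ = (d ν : ℂ) * ((Complex.normSq (W ν m) : ℝ) : ℂ) := by rw [hns]

lemma unitary_row_sum {ι : Type*} [Fintype ι] [DecidableEq ι] {W : Matrix ι ι ℂ}
    (hW : W ∈ Matrix.unitaryGroup ι ℂ) (ν : ι) :
    ∑ m, Complex.normSq (W ν m) = 1 := by
  have h := Matrix.mem_unitaryGroup_iff.mp hW
  have h2 := congrArg (fun M => M ν ν) h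
  simp only [Matrix.mul_apply, Matrix.one_apply_eq] at h2
  have h3 : ∑ m, (W ν m) * (star W) m ν = ∑ m, ((Complex.normSq (W ν m) : ℝ) : ℂ) := by
    apply Finset.sum_congr rfl
    intro m _
    simp [Matrix.star_apply, Complex.star_def, Complex.mul_conj]
  rw [h3] at h2
  exact_mod_cast h2

lemma unitary_col_sum {ι : Type*} [Fintype ι] [DecidableEq ι] {W : Matrix ι ι ℂ}
    (hW : W ∈ Matrix.unitaryGroup ι ℂ) (m : ι) :
    ∑ ν, Complex.normSq (W ν m) = 1 := by
  have h := Matrix.mem_unitaryGroup_iff'.mp hW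
  have h2 := congrArg (fun M => M m m) h
  simp only [Matrix.mul_apply, Matrix.one_apply_eq] at h2
  have h3 : ∑ ν, (star W) m ν * (W ν m) = ∑ ν, ((Complex.normSq (W ν m) : ℝ) : ℂ) := by
    apply Finset.sum_congr rfl
    intro ν _
    rw [Matrix.star_apply, mul_comm]; simp [Complex.star_def, Complex.mul_conj]
  rw [h3] at h2
  exact_mod_cast h2

/-- norm preservation under unitary mulVec -/
lemma mulVec_normSq_sum {n : ℕ} {B : Matrix (Fin n) (Fin n) ℂ}
    (hB : B ∈ Matrix.unitaryGroup (Fin n) ℂ) (x : Fin n → ℂ) :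
    ∑ r, Complex.normSq ((B *ᵥ x) r) = ∑ r, Complex.normSq (x r) := by
  have key : ∀ y : Fin n → ℂ, (∑ r, (Complex.normSq (y r) : ℂ)) = star y ⬝ᵥ y := by
    intro y
    simp only [dotProduct, Pi.star_apply]
    apply Finset.sum_congr rfl
    intro r _
    rw [Complex.normSq_eq_conj_mul_self]
    rfl
  have h1 : star (B *ᵥ x) ⬝ᵥ (B *ᵥ x) = star x ⬝ᵥ x := by
    rw [Matrix.star_mulVec, Matrix.dotProduct_mulVec, Matrix.vecMul_vecMul,
      ← Matrix.star_eq_conjTranspose, Matrix.mem_unitaryGroup_iff'.mp hB, Matrix.vecMul_one]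
  have h2 := (key (B *ᵥ x)).trans (h1.trans (key x).symm)
  exact_mod_cast h2

lemma kron_conjTranspose {a b : ℕ} (P : Matrix (Fin a) (Fin a) ℂ) (Q : Matrix (Fin b) (Fin b) ℂ) :
    (P ⊗ₖ Q)ᴴ = Pᴴ ⊗ₖ Qᴴ := by
  ext ⟨i, j⟩ ⟨k, l⟩
  simp [Matrix.conjTranspose_apply, Matrix.kroneckerMap_apply]

lemma kron_mem_unitary {a b : ℕ} {P : Matrix (Fin a) (Fin a) ℂ} {Q : Matrix (Fin b) (Fin b) ℂ}
    (hP : P ∈ Matrix.unitaryGroup (Fin a) ℂ) (hQ : Q ∈ Matrix.unitaryGroup (Fin b) ℂ) :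
    P ⊗ₖ Q ∈ Matrix.unitaryGroup (Fin a × Fin b) ℂ := by
  constructor
  · rw [Matrix.star_eq_conjTranspose, kron_conjTranspose, ← Matrix.mul_kronecker_mul,
      ← Matrix.star_eq_conjTranspose (M := P), ← Matrix.star_eq_conjTranspose (M := Q),
      Matrix.mem_unitaryGroup_iff'.mp hP, Matrix.mem_unitaryGroup_iff'.mp hQ,
      Matrix.one_kronecker_one]
  · rw [Matrix.star_eq_conjTranspose, kron_conjTranspose, ← Matrix.mul_kronecker_mul,
      ← Matrix.star_eq_conjTranspose (M := P), ← Matrix.star_eq_conjTranspose (M := Q),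
      Matrix.mem_unitaryGroup_iff.mp hP, Matrix.mem_unitaryGroup_iff.mp hQ,
      Matrix.one_kronecker_one]

/-- Ky-Fan-type bound -/
lemma subset_diag_le {ι : Type*} [Fintype ι] [DecidableEq ι] (d : ι → ℝ)
    (W : Matrix ι ι ℂ) (hW : W ∈ Matrix.unitaryGroup ι ℂ) (t : Finset ι)
    (s : Finset ι) (hs : s.card = t.card)
    (hmax : ∀ s' : Finset ι, s'.card = t.card → ∑ ν ∈ s', d ν ≤ ∑ ν ∈ s, d ν) :
    (∑ m ∈ t, (star W * Matrix.diagonal (fun ν => (d ν : ℂ)) * W) m m).re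
      ≤ ∑ ν ∈ s, d ν := by
  set c : ι → ℝ := fun ν => ∑ m ∈ t, Complex.normSq (W ν m) with hc
  have hre : (∑ m ∈ t, (star W * Matrix.diagonal (fun ν => (d ν : ℂ)) * W) m m).re
      = ∑ ν, d ν * c ν := by
    have hh : ∑ m ∈ t, (star W * Matrix.diagonal (fun ν => (d ν : ℂ)) * W) m m
        = ((∑ m ∈ t, ∑ ν, d ν * Complex.normSq (W ν m) : ℝ) : ℂ) := by
      push_cast
      exact Finset.sum_congr rfl (fun m _ => by rw [diag_conj_apply]; push_cast; rfl)
    rw [hh, Complex.ofReal_re, Finset.sum_comm]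
    apply Finset.sum_congr rfl
    intro ν _
    rw [hc, Finset.mul_sum]
  rw [hre]
  apply sum_mul_le_max_subset d c ?_ ?_ t.card ?_ s hs hmax
  · intro ν
    exact Finset.sum_nonneg (fun m _ => Complex.normSq_nonneg _)
  · intro ν
    calc c ν ≤ ∑ m, Complex.normSq (W ν m) :=
          Finset.sum_le_sum_of_subset_of_nonneg (Finset.subset_univ t)
            (fun m _ _ => Complex.normSq_nonneg _)
      _ = 1 := unitary_row_sum hW ν
  · rw [hc, Finset.sum_comm, Finset.sum_congr rfl (fun m (_ : m ∈ t) => unitary_col_sum hW m)]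
    simp

/-- trace equals sum of eigenvalues -/
lemma trace_eq_sum_eig {n : Type*} [Fintype n] [DecidableEq n]
    {M : Matrix n n ℂ} (hM : M.IsHermitian) :
    M.trace = ((∑ m, hM.eigenvalues m : ℝ) : ℂ) := by
  conv_lhs => rw [hM.spectral_theorem, Unitary.conjStarAlgAut_apply]
  rw [Matrix.trace_mul_cycle,
    Matrix.mem_unitaryGroup_iff'.mp (SetLike.coe_mem hM.eigenvectorUnitary), Matrix.one_mul,
    Matrix.trace_diagonal]
  push_cast
  rfl

set_option maxHeartbeats 2000000 in
theorem alignment_with_commuting_factor {dH dK ℓ : ℕ}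
    (C : Fin ℓ → Matrix (Fin dK) (Fin dK) ℂ) (A : Fin ℓ → Matrix (Fin dH) (Fin dH) ℂ)
    (hC : ∀ i, (C i).PosSemidef)
    (hdiag : ∃ U ∈ Matrix.unitaryGroup (Fin dK) ℂ, ∀ i, ∃ dv : Fin dK → ℝ,
      C i = U * Matrix.diagonal (fun j => (dv j : ℂ)) * star U)
    (hA : ∀ i, (A i).IsHermitian)
    (p : Fin ℓ → ℝ) (hp : ∀ i, 0 ≤ p i) (hp1 : ∑ i, p i = 1)
    (h₁ : (∑ i, p i • (C i ⊗ₖ matDown (hA i))).IsHermitian)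
    (h₂ : (∑ i, p i • (C i ⊗ₖ A i)).IsHermitian) :
    Majorizes h₁.eigenvalues h₂.eigenvalues := by
  classical
  obtain ⟨U, hU, hd⟩ := hdiag
  choose dv hdv using hd
  have hUU' : star U * U = 1 := Matrix.mem_unitaryGroup_iff'.mp hU
  have cancelU : ∀ D : Matrix (Fin dK) (Fin dK) ℂ, star U * (U * D * star U) * U = D := by
    intro D
    calc star U * (U * D * star U) * U = (star U * U) * D * (star U * U) := by
          simp only [Matrix.mul_assoc]
      _ = D := by rw [hUU', Matrix.one_mul, Matrix.mul_one]
  -- nonnegativity of the dv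
  have hdvnn : ∀ i j, 0 ≤ dv i j := by
    intro i j
    have hps : (Matrix.diagonal fun j => (dv i j : ℂ)).PosSemidef := by
      have hcon := (hC i).conjTranspose_mul_mul_same (B := U)
      rw [← Matrix.star_eq_conjTranspose] at hcon
      rw [show Matrix.diagonal (fun j => (dv i j : ℂ)) = star U * C i * U by
        rw [hdv i]; exact (cancelU _).symm]
      exact hcon
    have h0 := Matrix.posSemidef_diagonal_iff.mp hps j
    exact Complex.zero_le_real.mp h0
  -- notation
  set ΛA : Fin ℓ → Fin dH → ℝ := fun i => (hA i).eigenvalues with hΛA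
  set μ : Fin ℓ → Fin dH → ℝ := fun i => sortDesc (hA i).eigenvalues with hμ
  set e : Fin dK × Fin dH → ℝ := fun ν => ∑ i, p i * (dv i ν.1 * μ i ν.2) with he
  set V : Matrix (Fin dK × Fin dH) (Fin dK × Fin dH) ℂ :=
    U ⊗ₖ (1 : Matrix (Fin dH) (Fin dH) ℂ) with hVdef
  have h1mem : (1 : Matrix (Fin dH) (Fin dH) ℂ) ∈ Matrix.unitaryGroup (Fin dH) ℂ := by
    constructor <;> simp
  have hV : V ∈ Matrix.unitaryGroup (Fin dK × Fin dH) ℂ := kron_mem_unitary hU h1mem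
  have hstarV : star V = star U ⊗ₖ (1 : Matrix (Fin dH) (Fin dH) ℂ) := by
    rw [hVdef, Matrix.star_eq_conjTranspose, kron_conjTranspose, Matrix.conjTranspose_one,
      ← Matrix.star_eq_conjTranspose]
  -- KI1 : conjugating M₁ by V gives the diagonal matrix with entries e
  have KI1 : star V * (∑ i, p i • (C i ⊗ₖ matDown (hA i))) * V
      = Matrix.diagonal (fun ν => (e ν : ℂ)) := by
    rw [Matrix.mul_sum, Matrix.sum_mul]
    have term : ∀ i, star V * (p i • (C i ⊗ₖ matDown (hA i))) * V
        = p i • Matrix.diagonal (fun ν : Fin dK × Fin dH =>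
            ((dv i ν.1 * μ i ν.2 : ℝ) : ℂ)) := by
      intro i
      rw [Matrix.mul_smul, Matrix.smul_mul]
      congr 1
      rw [hdv i, hstarV, hVdef]
      have hmd : matDown (hA i) = Matrix.diagonal (fun r => (μ i r : ℂ)) := rfl
      rw [hmd, ← Matrix.mul_kronecker_mul, ← Matrix.mul_kronecker_mul, cancelU,
        Matrix.one_mul, Matrix.mul_one, Matrix.diagonal_kronecker_diagonal]
      congr 1
      funext ν
      push_cast
      ring
    rw [Finset.sum_congr rfl (fun i _ => term i)]
    ext ν ν'
    simp only [Matrix.sum_apply, Matrix.smul_apply, Matrix.diagonal_apply, he]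
    split_ifs with h
    · simp only [Complex.real_smul]
      push_cast
      rfl
    · simp
  -- per-i spectral decomposition of C i ⊗ A i
  set Ei : Fin ℓ → Matrix (Fin dH) (Fin dH) ℂ :=
    fun i => ((hA i).eigenvectorUnitary : Matrix (Fin dH) (Fin dH) ℂ) with hEidef
  have hEimem : ∀ i, Ei i ∈ Matrix.unitaryGroup (Fin dH) ℂ :=
    fun i => SetLike.coe_mem _
  set Vi : Fin ℓ → Matrix (Fin dK × Fin dH) (Fin dK × Fin dH) ℂ :=
    fun i => U ⊗ₖ Ei i with hVidef
  have hVimem : ∀ i, Vi i ∈ Matrix.unitaryGroup (Fin dK × Fin dH) ℂ :=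
    fun i => kron_mem_unitary hU (hEimem i)
  set g : Fin ℓ → Fin dK × Fin dH → ℝ := fun i ν => dv i ν.1 * ΛA i ν.2 with hg
  have hstarVi : ∀ i, star (Vi i) = star U ⊗ₖ star (Ei i) := by
    intro i
    rw [hVidef, Matrix.star_eq_conjTranspose, kron_conjTranspose,
      ← Matrix.star_eq_conjTranspose (M := U), ← Matrix.star_eq_conjTranspose (M := Ei i)]
  have KI2 : ∀ i, C i ⊗ₖ A i
      = Vi i * Matrix.diagonal (fun ν => (g i ν : ℂ)) * star (Vi i) := by
    intro i
    have hdg : (Matrix.diagonal fun j => (dv i j : ℂ)) ⊗ₖ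
        (Matrix.diagonal (RCLike.ofReal ∘ (hA i).eigenvalues) : Matrix (Fin dH) (Fin dH) ℂ)
        = Matrix.diagonal (fun ν : Fin dK × Fin dH => (g i ν : ℂ)) := by
      rw [Matrix.diagonal_kronecker_diagonal]
      ext ν ν'
      by_cases h : ν = ν'
      · subst h
        simp only [Matrix.diagonal_apply_eq, hg]
        push_cast
        rfl
      · rw [Matrix.diagonal_apply_ne _ h, Matrix.diagonal_apply_ne _ h]
    calc C i ⊗ₖ A i
        = ((U * Matrix.diagonal fun j => (dv i j : ℂ)) * star U) ⊗ₖ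
            ((Ei i * Matrix.diagonal (RCLike.ofReal ∘ (hA i).eigenvalues)) * star (Ei i)) := by
          rw [← hdv i]
          exact congrArg (fun X => C i ⊗ₖ X) (hA i).spectral_theorem
      _ = (U ⊗ₖ Ei i) * ((Matrix.diagonal fun j => (dv i j : ℂ)) ⊗ₖ
            Matrix.diagonal (RCLike.ofReal ∘ (hA i).eigenvalues)) * (star U ⊗ₖ star (Ei i)) := by
          rw [Matrix.mul_kronecker_mul, Matrix.mul_kronecker_mul]
      _ = Vi i * Matrix.diagonal (fun ν => (g i ν : ℂ)) * star (Vi i) := by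
          rw [hdg, hstarVi i, show Vi i = U ⊗ₖ Ei i from rfl]
  constructor
  · -- subset-sum inequality part
    intro t
    set E₂ : Matrix (Fin dK × Fin dH) (Fin dK × Fin dH) ℂ :=
      (h₂.eigenvectorUnitary : Matrix (Fin dK × Fin dH) (Fin dK × Fin dH) ℂ) with hE₂def
    have hE₂mem : E₂ ∈ Matrix.unitaryGroup (Fin dK × Fin dH) ℂ := SetLike.coe_mem _
    set W : Fin ℓ → Matrix (Fin dK × Fin dH) (Fin dK × Fin dH) ℂ :=
      fun i => star (Vi i) * E₂ with hWdef
    have hWmem : ∀ i, W i ∈ Matrix.unitaryGroup (Fin dK × Fin dH) ℂ :=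
      fun i => mul_mem (Unitary.star_mem (hVimem i)) hE₂mem
    set W₀ : Matrix (Fin dK × Fin dH) (Fin dK × Fin dH) ℂ := star V * E₂ with hW₀def
    have hW₀mem : W₀ ∈ Matrix.unitaryGroup (Fin dK × Fin dH) ℂ :=
      mul_mem (Unitary.star_mem hV) hE₂mem
    set c : Fin ℓ → Fin dK × Fin dH → ℝ :=
      fun i ν => ∑ m ∈ t, Complex.normSq (W i ν m) with hcdef
    set c₀ : Fin dK × Fin dH → ℝ := fun ν => ∑ m ∈ t, Complex.normSq (W₀ ν m) with hc₀def
    set κ : Fin dK → ℝ := fun j => ∑ r, c₀ (j, r) with hκdef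
    -- conjugation of M₂
    have hM₂conj : star E₂ * (∑ i, p i • (C i ⊗ₖ A i)) * E₂
        = ∑ i, p i • (star (W i) * Matrix.diagonal (fun ν => (g i ν : ℂ)) * W i) := by
      rw [Matrix.mul_sum, Matrix.sum_mul]
      apply Finset.sum_congr rfl
      intro i _
      rw [Matrix.mul_smul, Matrix.smul_mul]
      congr 1
      rw [KI2 i]
      have hsw : star (W i) = star E₂ * Vi i := by
        simp only [hWdef]
        rw [StarMul.star_mul, star_star]
      rw [hsw]
      simp only [hWdef]
      simp only [Matrix.mul_assoc]
    have hstep1 : ∑ m ∈ t, h₂.eigenvalues m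
        = (∑ m ∈ t, (star E₂ * (∑ i, p i • (C i ⊗ₖ A i)) * E₂) m m).re := by
      rw [show star E₂ * (∑ i, p i • (C i ⊗ₖ A i)) * E₂
          = Matrix.diagonal (RCLike.ofReal ∘ h₂.eigenvalues)
          by have := h₂.conjStarAlgAut_star_eigenvectorUnitary; rwa [Unitary.conjStarAlgAut_star_apply] at this]
      have hdg2 : ∀ m, (Matrix.diagonal (RCLike.ofReal ∘ h₂.eigenvalues)
          : Matrix (Fin dK × Fin dH) (Fin dK × Fin dH) ℂ) m m
          = ((h₂.eigenvalues m : ℝ) : ℂ) := fun m => Matrix.diagonal_apply_eq _ m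
      rw [Finset.sum_congr rfl (fun m _ => hdg2 m), ← Complex.ofReal_sum, Complex.ofReal_re]
    have hentry : ∀ m, (star E₂ * (∑ i, p i • (C i ⊗ₖ A i)) * E₂) m m
        = ((∑ i, p i * ∑ ν : Fin dK × Fin dH, g i ν * Complex.normSq (W i ν m) : ℝ) : ℂ) := by
      intro m
      rw [hM₂conj, Matrix.sum_apply]
      push_cast
      apply Finset.sum_congr rfl
      intro i _
      rw [Matrix.smul_apply, diag_conj_apply, Complex.real_smul]
      push_cast
      ring
    have hsum2 : ∑ m ∈ t, h₂.eigenvalues m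
        = ∑ i, p i * ∑ ν : Fin dK × Fin dH, g i ν * c i ν := by
      rw [hstep1, Finset.sum_congr rfl (fun m _ => hentry m), ← Complex.ofReal_sum,
        Complex.ofReal_re, Finset.sum_comm]
      apply Finset.sum_congr rfl
      intro i _
      rw [← Finset.mul_sum]
      congr 1
      rw [Finset.sum_comm]
      apply Finset.sum_congr rfl
      intro ν _
      simp only [hcdef]
      rw [Finset.mul_sum]
    -- coupling of the coefficients across i
    have hWent : ∀ i (j : Fin dK) (m : Fin dK × Fin dH),
        (fun r => W i (j, r) m) = (star (Ei i)) *ᵥ (fun r' => W₀ (j, r') m) := by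
      intro i j m
      have hWfac : W i = ((1 : Matrix (Fin dK) (Fin dK) ℂ) ⊗ₖ star (Ei i)) * W₀ := by
        simp only [hWdef, hW₀def]
        rw [hstarVi i, hstarV, ← Matrix.mul_assoc]
        congr 1
        rw [← Matrix.mul_kronecker_mul, Matrix.one_mul, Matrix.mul_one]
      funext r
      have happ : (((1 : Matrix (Fin dK) (Fin dK) ℂ) ⊗ₖ star (Ei i)) * W₀) (j, r) m
          = ∑ r', (star (Ei i)) r r' * W₀ (j, r') m := by
        rw [Matrix.mul_apply, Fintype.sum_prod_type]
        simp [Matrix.kroneckerMap_apply, Matrix.one_apply, ite_mul, zero_mul,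
          Finset.sum_ite_eq, mul_assoc]
      rw [hWfac, happ]
      rfl
    have hcsum : ∀ i (j : Fin dK), ∑ r, c i (j, r) = κ j := by
      intro i j
      simp only [hcdef, hκdef, hc₀def]
      rw [Finset.sum_comm]
      conv_rhs => rw [Finset.sum_comm]
      apply Finset.sum_congr rfl
      intro m _
      have hcong := congrArg (fun f : Fin dH → ℂ => ∑ r, Complex.normSq (f r)) (hWent i j m)
      beta_reduce at hcong
      rw [hcong]
      exact mulVec_normSq_sum (Unitary.star_mem (hEimem i)) _
    have hc0 : ∀ i ν, 0 ≤ c i ν :=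
      fun i ν => Finset.sum_nonneg fun m _ => Complex.normSq_nonneg _
    have hc1 : ∀ i ν, c i ν ≤ 1 := by
      intro i ν
      calc c i ν ≤ ∑ m, Complex.normSq (W i ν m) :=
            Finset.sum_le_sum_of_subset_of_nonneg (Finset.subset_univ t)
              (fun m _ _ => Complex.normSq_nonneg _)
        _ = 1 := unitary_row_sum (hWmem i) ν
    have hc₀0 : ∀ ν, 0 ≤ c₀ ν :=
      fun ν => Finset.sum_nonneg fun m _ => Complex.normSq_nonneg _
    have hc₀1 : ∀ ν, c₀ ν ≤ 1 := by
      intro ν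
      calc c₀ ν ≤ ∑ m, Complex.normSq (W₀ ν m) :=
            Finset.sum_le_sum_of_subset_of_nonneg (Finset.subset_univ t)
              (fun m _ _ => Complex.normSq_nonneg _)
        _ = 1 := unitary_row_sum hW₀mem ν
    have hκ0 : ∀ j, 0 ≤ κ j := fun j => Finset.sum_nonneg fun r _ => hc₀0 _
    have hκn : ∀ j, κ j ≤ dH := by
      intro j
      calc κ j ≤ ∑ _r : Fin dH, (1 : ℝ) := Finset.sum_le_sum (fun r _ => hc₀1 (j, r))
        _ = dH := by simp
    have hΓsum : ∑ ν : Fin dK × Fin dH, gam (κ ν.1) (ν.2 : ℕ) = (t.card : ℝ) := by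
      rw [Fintype.sum_prod_type]
      rw [Finset.sum_congr rfl (fun j (_ : j ∈ univ) => sum_gam_fin (hκ0 j) (hκn j))]
      simp only [hκdef]
      rw [← Fintype.sum_prod_type]
      simp only [hc₀def]
      rw [Finset.sum_comm, Finset.sum_congr rfl (fun m (_ : m ∈ t) => unitary_col_sum hW₀mem m)]
      simp
    have hij : ∀ i j, ∑ r, ΛA i r * c i (j, r)
        ≤ ∑ r : Fin dH, μ i r * gam (κ j) (r : ℕ) := by
      intro i j
      have hb := sum_mul_le_sortDesc_gam (ΛA i) (fun r => c i (j, r))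
        (fun r => hc0 i (j, r)) (fun r => hc1 i (j, r))
      rw [hcsum i j] at hb
      exact hb
    have hchain : ∑ i, p i * ∑ ν : Fin dK × Fin dH, g i ν * c i ν
        ≤ ∑ ν : Fin dK × Fin dH, e ν * gam (κ ν.1) (ν.2 : ℕ) := by
      have hper : ∀ i, ∑ ν : Fin dK × Fin dH, g i ν * c i ν
          = ∑ j, dv i j * ∑ r, ΛA i r * c i (j, r) := by
        intro i
        rw [Fintype.sum_prod_type]
        apply Finset.sum_congr rfl
        intro j _
        rw [Finset.mul_sum]
        apply Finset.sum_congr rfl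
        intro r _
        simp only [hg]
        ring
      have hper2 : ∀ i, ∑ j, dv i j * ∑ r, ΛA i r * c i (j, r)
          ≤ ∑ j, dv i j * ∑ r : Fin dH, μ i r * gam (κ j) (r : ℕ) :=
        fun i => Finset.sum_le_sum (fun j _ => mul_le_mul_of_nonneg_left (hij i j) (hdvnn i j))
      calc ∑ i, p i * ∑ ν : Fin dK × Fin dH, g i ν * c i ν
          ≤ ∑ i, p i * ∑ j, dv i j * ∑ r : Fin dH, μ i r * gam (κ j) (r : ℕ) := by
            apply Finset.sum_le_sum
            intro i _
            rw [hper i]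
            exact mul_le_mul_of_nonneg_left (hper2 i) (hp i)
        _ = ∑ i, ∑ j, ∑ r : Fin dH, p i * (dv i j * (μ i r * gam (κ j) (r : ℕ))) := by
            simp only [Finset.mul_sum]
        _ = ∑ j, ∑ r : Fin dH, ∑ i, p i * (dv i j * (μ i r * gam (κ j) (r : ℕ))) := by
            rw [Finset.sum_comm]
            apply Finset.sum_congr rfl
            intro j _
            rw [Finset.sum_comm]
        _ = ∑ ν : Fin dK × Fin dH, e ν * gam (κ ν.1) (ν.2 : ℕ) := by
            rw [Fintype.sum_prod_type]
            apply Finset.sum_congr rfl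
            intro j _
            apply Finset.sum_congr rfl
            intro r _
            simp only [he, Finset.sum_mul]
            apply Finset.sum_congr rfl
            intro i _
            ring
    have hkcard : t.card ≤ Fintype.card (Fin dK × Fin dH) := by
      simpa using Finset.card_le_univ t
    obtain ⟨sE, hsEcard, hsEmax⟩ := exists_max_subset e t.card hkcard
    have hEΓ : ∑ ν : Fin dK × Fin dH, e ν * gam (κ ν.1) (ν.2 : ℕ) ≤ ∑ ν ∈ sE, e ν :=
      sum_mul_le_max_subset e (fun ν => gam (κ ν.1) (ν.2 : ℕ))
        (fun ν => gam_nonneg _ _) (fun ν => gam_le_one _ _) t.card hΓsum sE hsEcard hsEmax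
    obtain ⟨s₁, hs₁card, hs₁max⟩ := exists_max_subset h₁.eigenvalues t.card hkcard
    set E₁ : Matrix (Fin dK × Fin dH) (Fin dK × Fin dH) ℂ :=
      (h₁.eigenvectorUnitary : Matrix (Fin dK × Fin dH) (Fin dK × Fin dH) ℂ) with hE₁def
    have hE₁mem : E₁ ∈ Matrix.unitaryGroup (Fin dK × Fin dH) ℂ := SetLike.coe_mem _
    set W₁ : Matrix (Fin dK × Fin dH) (Fin dK × Fin dH) ℂ := star E₁ * V with hW₁def
    have hW₁mem : W₁ ∈ Matrix.unitaryGroup (Fin dK × Fin dH) ℂ :=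
      mul_mem (Unitary.star_mem hE₁mem) hV
    have hdiagE : Matrix.diagonal (fun ν => (e ν : ℂ))
        = star W₁ * Matrix.diagonal (fun ν => ((h₁.eigenvalues ν : ℝ) : ℂ)) * W₁ := by
      rw [← KI1]
      conv_lhs => rw [h₁.spectral_theorem, Unitary.conjStarAlgAut_apply]
      have hsw₁ : star W₁ = star V * E₁ := by
        simp only [hW₁def]
        rw [StarMul.star_mul, star_star]
      rw [hsw₁]
      simp only [hW₁def]
      simp only [Matrix.mul_assoc]
      rfl
    have hsEe : ∑ ν ∈ sE, e ν ≤ ∑ ν ∈ s₁, h₁.eigenvalues ν := by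
      have h1 : ∑ ν ∈ sE, e ν
          = (∑ m ∈ sE, (star W₁ * Matrix.diagonal
              (fun ν => ((h₁.eigenvalues ν : ℝ) : ℂ)) * W₁) m m).re := by
        rw [← hdiagE]
        rw [Finset.sum_congr rfl
          (fun νm (_ : νm ∈ sE) => Matrix.diagonal_apply_eq (fun ν => (e ν : ℂ)) νm),
          ← Complex.ofReal_sum, Complex.ofReal_re]
      rw [h1]
      exact subset_diag_le h₁.eigenvalues W₁ hW₁mem sE s₁ (hs₁card.trans hsEcard.symm)
        (fun s' hs' => hs₁max s' (hs'.trans hsEcard))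
    refine ⟨s₁, hs₁card, ?_⟩
    rw [hsum2]
    linarith
  · -- trace equality part
    have htrAi : ∀ i, (matDown (hA i)).trace = (A i).trace := by
      intro i
      rw [trace_eq_sum_eig (hA i)]
      show (Matrix.diagonal fun r => ((sortDesc (hA i).eigenvalues r : ℝ) : ℂ)).trace = _
      rw [Matrix.trace_diagonal, ← Complex.ofReal_sum]
      congr 1
      exact Equiv.sum_comp (Tuple.sort fun j => OrderDual.toDual ((hA i).eigenvalues j))
        (hA i).eigenvalues
    have htrM : (∑ i, p i • (C i ⊗ₖ A i)).trace
        = (∑ i, p i • (C i ⊗ₖ matDown (hA i))).trace := by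
      rw [Matrix.trace_sum, Matrix.trace_sum]
      apply Finset.sum_congr rfl
      intro i _
      rw [Matrix.trace_smul, Matrix.trace_smul, Matrix.trace_kronecker,
        Matrix.trace_kronecker, htrAi i]
    have h2t := trace_eq_sum_eig h₂
    have h1t := trace_eq_sum_eig h₁
    have hfin := h2t.symm.trans (htrM.trans h1t)
    exact_mod_cast hfin
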